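/- Let C be a uniform clutter whose incidence matrix (the matrix with columns the characteristic vectors v_1,...,v_s) has rank n, and suppose the edge ideal I = (y^{v_1},...,y^{v_s}) ⊆ K[y_1,...,y_n] is normal, i.e., for every i ≥ 1 and every monomial y^a, if (y^a)^p ∈ I^{pi} for some p ≥ 1 then y^a ∈ I^i. Then the algebraic toric set X ⊆ P^{s-1} parameterized by the edge monomials satisfies |X| = (q-1)^{n-1}. -/

import Mathlib

noncomputable section

open scoped BigOperators

/-- The vanishing ideal `I(Y)` of a set `Y` of points in projective space: the ideal
generated by the homogeneous polynomials vanishing at every point of `Y`. -/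
def vanishingIdeal (K : Type*) [Field K] {s : ℕ}
    (Y : Set (Projectivization K (Fin s → K))) : Ideal (MvPolynomial (Fin s) K) :=
  Ideal.span {f | (∃ d, f.IsHomogeneous d) ∧ ∀ P ∈ Y, MvPolynomial.eval P.rep f = 0}

/-- The Hilbert function `d ↦ dim_K (S/I)_d` of the standard graded quotient `S/I`. -/
def hilbertFunction {K : Type*} [Field K] {s : ℕ}
    (I : Ideal (MvPolynomial (Fin s) K)) (d : ℕ) : ℕ :=
  Module.finrank K ((MvPolynomial.homogeneousSubmodule (Fin s) K d).map
    (Ideal.Quotient.mkₐ K I).toLinearMap)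

/-- The index of regularity of `S/I(Y)`: the least `p ≥ 0` such that
`H_Y(d) = |Y|` for all `d ≥ p`. -/
def regIndex {K : Type*} [Field K] {s : ℕ}
    (Y : Set (Projectivization K (Fin s → K))) : ℕ :=
  sInf {p : ℕ | ∀ d, p ≤ d → hilbertFunction (vanishingIdeal K Y) d = Y.ncard}

/-- The algebraic toric set in `P^{s-1}` parameterized by the monomials `y^{v_1},…,y^{v_s}`. -/
def toricSet (K : Type*) [Field K] {n s : ℕ} (v : Fin s → Fin n → ℕ) :
    Set (Projectivization K (Fin s → K)) :=
  {P | ∃ x : Fin n → K, (∀ j, x j ≠ 0) ∧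
      ∃ h : (fun i : Fin s => ∏ j, x j ^ v i j) ≠ 0,
        P = Projectivization.mk K (fun i : Fin s => ∏ j, x j ^ v i j) h}

/-- The projective torus in `P^{s-1}`: the points all of whose coordinates are nonzero. -/
def projTorus (K : Type*) [Field K] (s : ℕ) : Set (Projectivization K (Fin s → K)) :=
  {P | ∀ i, P.rep i ≠ 0}

/-- The parameterized (evaluation) code `C_Y(d)`: the image of the degree-`d` evaluation map
`f ↦ (f(P)/t_1^d(P))_{P ∈ Y}`. -/
def evalCode (K : Type*) [Field K] {s : ℕ} [NeZero s]
    (Y : Set (Projectivization K (Fin s → K))) (d : ℕ) : Set (Y → K) :=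
  {w | ∃ f ∈ MvPolynomial.homogeneousSubmodule (Fin s) K d,
      w = fun P : Y => MvPolynomial.eval (P : Projectivization K (Fin s → K)).rep f /
        ((P : Projectivization K (Fin s → K)).rep 0) ^ d}

/-- The minimum distance of a code: the least number of nonzero entries of a
nonzero codeword. -/
def minDist {K : Type*} [Field K] {ι : Type*} (C : Set (ι → K)) : ℕ :=
  sInf {m | ∃ w ∈ C, w ≠ 0 ∧ m = {i | w i ≠ 0}.ncard}

/-- `v 1,…,v s` are the characteristic vectors of the edges of a clutter: all the entries
are in `{0,1}` and no edge (support) is contained in another. -/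
def IsClutter {n s : ℕ} (v : Fin s → Fin n → ℕ) : Prop :=
  (∀ i j, v i j ≤ 1) ∧ ∀ i k : Fin s, i ≠ k → ∃ j, v i j ≠ 0 ∧ v k j = 0

/-- An ideal of `K[t_1,…,t_s]` is a complete intersection if it can be generated by `s-1`
homogeneous polynomials. -/
def IsCompleteIntersection {K : Type*} [Field K] {s : ℕ}
    (I : Ideal (MvPolynomial (Fin s) K)) : Prop :=
  ∃ g : Fin (s - 1) → MvPolynomial (Fin s) K,
    (∀ i, ∃ d, (g i).IsHomogeneous d) ∧ Ideal.span (Set.range g) = I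

end

noncomputable section

/-- The edge ideal of the clutter with characteristic vectors `v_1,…,v_s`: the ideal of
`K[y_1,…,y_n]` generated by the monomials `y^{v_1},…,y^{v_s}`. -/
def edgeIdeal (K : Type*) [Field K] {n s : ℕ} (v : Fin s → Fin n → ℕ) :
    Ideal (MvPolynomial (Fin n) K) :=
  Ideal.span (Set.range fun i : Fin s => ∏ j, MvPolynomial.X j ^ v i j)

end

namespace Aux
open MvPolynomial Pointwise

variable {K : Type*} [Field K] {n s : ℕ}

theorem prod_X_pow_eq (a : Fin n → ℕ) :
    (∏ j, X j ^ a j : MvPolynomial (Fin n) K) = monomial (Finsupp.equivFunOnFinite.symm a) 1 := by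
  refine Eq.symm ?_
  rw [← prod_X_pow_eq_monomial]
  simp only [Finsupp.coe_equivFunOnFinite_symm]
  apply Finset.prod_subset (Finset.subset_univ _)
  intro j _ hj
  simp only [Finsupp.mem_support_iff, Finsupp.coe_equivFunOnFinite_symm, not_not] at hj
  simp [hj]

theorem prod_mem_pow {R : Type*} [CommRing R] (I : Ideal R) {ι : Type*} (F : Finset ι) (g : ι → R)
    (N : ι → ℕ) (h : ∀ i ∈ F, g i ∈ I ^ N i) : (∏ i ∈ F, g i) ∈ I ^ (∑ i ∈ F, N i) := by
  classical
  induction F using Finset.induction_on with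
  | empty => simp
  | @insert a F' hnm ih =>
    rw [Finset.prod_insert hnm, Finset.sum_insert hnm, pow_add]
    exact Ideal.mul_mem_mul (h a (Finset.mem_insert_self a F'))
      (ih fun i hi => h i (Finset.mem_insert_of_mem hi))

theorem monomial_prod {ι : Type*} (F : Finset ι) (dd : ι → (Fin n →₀ ℕ)) :
    (∏ i ∈ F, monomial (dd i) (1:K)) = monomial (∑ i ∈ F, dd i) 1 := by
  classical
  induction F using Finset.induction_on with
  | empty => simp
  | @insert a F' hnm ih =>
    rw [Finset.prod_insert hnm, Finset.sum_insert hnm, ih, monomial_mul, one_mul]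

/-- If `a = ∑ i, N i * v i` then `y^a ∈ I^(∑ N)`. -/
theorem mem_pow_of (v : Fin s → Fin n → ℕ) (N : Fin s → ℕ) (a : Fin n → ℕ)
    (ha : ∀ j, a j = ∑ i, N i * v i j) :
    (∏ j, X j ^ a j : MvPolynomial (Fin n) K) ∈ (edgeIdeal K v) ^ (∑ i, N i) := by
  have hfs : Finsupp.equivFunOnFinite.symm a
      = ∑ i, N i • Finsupp.equivFunOnFinite.symm (v i) := by
    ext j; simp [ha j]
  have key : (∏ j, X j ^ a j : MvPolynomial (Fin n) K)
      = ∏ i, (∏ j, X j ^ v i j : MvPolynomial (Fin n) K) ^ N i := by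
    simp only [prod_X_pow_eq, monomial_pow, one_pow]
    rw [monomial_prod (K := K) Finset.univ (fun i => N i • Finsupp.equivFunOnFinite.symm (v i)),
      hfs]
  rw [key]
  exact prod_mem_pow _ _ _ _ fun i _ =>
    Ideal.pow_mem_pow (Ideal.subset_span (Set.mem_range_self i)) (N i)

/-- Extraction: if `y^a ∈ I^t` then `a` dominates a sum of `t` edge vectors. -/
theorem extract (v : Fin s → Fin n → ℕ) (t : ℕ) (a : Fin n → ℕ)
    (h : (∏ j, X j ^ a j : MvPolynomial (Fin n) K) ∈ (edgeIdeal K v) ^ t) :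
    ∃ β : Fin t → Fin s, ∀ j, (∑ r, v (β r) j) ≤ a j := by
  classical
  set T : Set (Fin n →₀ ℕ) :=
    {D | ∃ β : Fin t → Fin s, D = ∑ r, Finsupp.equivFunOnFinite.symm (v (β r))} with hT
  have hsub : (edgeIdeal K v) ^ t ≤ Ideal.span ((fun s₀ => monomial s₀ (1:K)) '' T) := by
    rw [edgeIdeal]
    have hrw : (Set.range fun i : Fin s => ∏ j, (X j : MvPolynomial (Fin n) K) ^ v i j)
        = (fun s₀ => monomial s₀ (1:K)) ''
          (Set.range fun i => Finsupp.equivFunOnFinite.symm (v i)) := by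
      ext p
      simp only [Set.mem_range, Set.mem_image, prod_X_pow_eq]
      constructor
      · rintro ⟨i, rfl⟩; exact ⟨_, ⟨i, rfl⟩, rfl⟩
      · rintro ⟨_, ⟨i, rfl⟩, rfl⟩; exact ⟨i, rfl⟩
    rw [hrw, show (Ideal.span ((fun s₀ => monomial s₀ (1:K)) ''
          (Set.range fun i => Finsupp.equivFunOnFinite.symm (v i)))) ^ t
        = Ideal.span ((((fun s₀ => monomial s₀ (1:K)) ''
          (Set.range fun i => Finsupp.equivFunOnFinite.symm (v i)))) ^ t)
      from Submodule.span_pow _ t]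
    apply Ideal.span_mono
    intro p hp
    rw [Set.mem_pow] at hp
    obtain ⟨f, hf⟩ := hp
    have hfi : ∀ i, ∃ β : Fin s,
        (f i : MvPolynomial (Fin n) K) = monomial (Finsupp.equivFunOnFinite.symm (v β)) 1 := by
      intro i
      obtain ⟨D, ⟨β, rfl⟩, hD⟩ := (f i).2
      exact ⟨β, hD.symm⟩
    choose β hβ using hfi
    refine ⟨∑ r, Finsupp.equivFunOnFinite.symm (v (β r)), ⟨β, rfl⟩, ?_⟩
    calc (monomial (∑ r, Finsupp.equivFunOnFinite.symm (v (β r))) (1:K))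
        = ∏ i, (f i : MvPolynomial (Fin n) K) := by
          rw [← monomial_prod]
          exact (Finset.prod_congr rfl fun i _ => (hβ i).symm)
      _ = (List.ofFn fun i => ((f i : MvPolynomial (Fin n) K))).prod :=
          (Fin.prod_ofFn _).symm
      _ = p := hf
  have h2 := hsub h
  rw [MvPolynomial.mem_ideal_span_monomial_image] at h2
  have hsupp : (Finsupp.equivFunOnFinite.symm a)
      ∈ (∏ j, X j ^ a j : MvPolynomial (Fin n) K).support := by
    rw [prod_X_pow_eq, support_monomial]
    simp
  obtain ⟨si, hsi, hle⟩ := h2 _ hsupp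
  obtain ⟨β, rfl⟩ := hsi
  refine ⟨β, fun j => ?_⟩
  have h3 := Finsupp.le_def.mp hle j
  simpa using h3

set_option maxHeartbeats 1000000 in
theorem key_lattice {K : Type*} [Field K] {n s : ℕ} (hs : 2 ≤ s)
    (v : Fin s → Fin n → ℕ)
    (hunif : ∀ i k : Fin s, ∑ j, v i j = ∑ j, v k j)
    (hv2 : ∀ i k : Fin s, i ≠ k → ∃ j, v i j ≠ 0 ∧ v k j = 0)
    (hrank : (Matrix.of fun (j : Fin n) (i : Fin s) => ((v i j : ℚ))).rank = n)
    (hnormal : ∀ i : ℕ, 1 ≤ i → ∀ a : Fin n → ℕ, ∀ p : ℕ, 1 ≤ p →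
      (∏ j, MvPolynomial.X j ^ a j : MvPolynomial (Fin n) K) ^ p ∈ (edgeIdeal K v) ^ (p * i) →
      (∏ j, MvPolynomial.X j ^ a j : MvPolynomial (Fin n) K) ∈ (edgeIdeal K v) ^ i)
    (w : Fin n → ℤ) (hw : ∑ j, w j = 0) :
    w ∈ Submodule.span ℤ (Set.range fun p : Fin s × Fin s =>
      ((fun j => (v p.1 j : ℤ)) - fun j => (v p.2 j : ℤ))) := by
  classical
  have hs0 : 0 < s := by omega
  -- Step A
  have htop : Submodule.span ℚ (Set.range fun (i : Fin s) (j : Fin n) => (v i j : ℚ)) = ⊤ := by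
    have h1 := (Matrix.rank_eq_finrank_span_cols
      (Matrix.of fun (j : Fin n) (i : Fin s) => ((v i j : ℚ))))
    rw [hrank] at h1
    have h2 : Set.range (Matrix.of fun (j : Fin n) (i : Fin s) => ((v i j : ℚ))).col
        = Set.range fun (i : Fin s) (j : Fin n) => (v i j : ℚ) := rfl
    rw [h2] at h1
    apply Submodule.eq_top_of_finrank_eq
    rw [← h1, Module.finrank_pi]
    simp
  -- Step B
  have hu : ∀ j, ∃ i, v i j ≠ 0 := by
    intro j
    by_contra hc
    push_neg at hc
    have hle : Submodule.span ℚ (Set.range fun (i : Fin s) (j : Fin n) => (v i j : ℚ))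
        ≤ LinearMap.ker (LinearMap.proj (R := ℚ) (φ := fun _ : Fin n => ℚ) j) := by
      rw [Submodule.span_le]
      rintro _ ⟨i, rfl⟩
      simp [LinearMap.mem_ker, hc i]
    rw [htop, top_le_iff] at hle
    have h2 : (Pi.single j (1:ℚ)) ∈ LinearMap.ker
        (LinearMap.proj (R := ℚ) (φ := fun _ : Fin n => ℚ) j) := by
      rw [hle]; trivial
    rw [LinearMap.mem_ker] at h2
    simp at h2
  -- Step C
  have hd1 : 1 ≤ ∑ j, v ⟨0, hs0⟩ j := by
    obtain ⟨j, hj, -⟩ := hv2 ⟨0, hs0⟩ ⟨1, by omega⟩ (by simp [Fin.ext_iff])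
    calc 1 ≤ v ⟨0, hs0⟩ j := Nat.one_le_iff_ne_zero.mpr hj
      _ ≤ _ := Finset.single_le_sum (f := fun j => v ⟨0, hs0⟩ j) (fun _ _ => Nat.zero_le _)
          (Finset.mem_univ j)
  -- Step D
  have hzmem : (fun j => (w j : ℚ)) ∈ Submodule.span ℚ
      (Set.range fun (i : Fin s) => (fun j => (v i j : ℚ)) - (fun j => (v ⟨0, hs0⟩ j : ℚ))) := by

    classical
    set i₀ : Fin s := ⟨0, hs0⟩
    set VQ : Fin s → Fin n → ℚ := fun i j => (v i j : ℚ) with hVQ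
    set degQ : (Fin n → ℚ) →ₗ[ℚ] ℚ :=
      { toFun := fun x => ∑ j, x j
        map_add' := by intros; simp [Finset.sum_add_distrib]
        map_smul' := by intros; simp [Finset.mul_sum] } with hdegQ
    have hdeg_diff : Submodule.span ℚ (Set.range fun (i : Fin s) => VQ i - VQ i₀)
        ≤ LinearMap.ker degQ := by
      rw [Submodule.span_le]
      rintro _ ⟨i, rfl⟩
      have : (∑ j, (v i j : ℚ)) = ∑ j, (v i₀ j : ℚ) := by
        push_cast [← Nat.cast_sum]
        exact_mod_cast congrArg (Nat.cast : ℕ → ℚ) (hunif i i₀)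
      simp [LinearMap.mem_ker, hdegQ, VQ, Finset.sum_sub_distrib, this]
    have hwmem : (fun j => (w j : ℚ)) ∈ Submodule.span ℚ (Set.range VQ) := htop ▸ Submodule.mem_top
    have hins : Submodule.span ℚ (Set.range VQ)
        ≤ Submodule.span ℚ (insert (VQ i₀) (Set.range fun i => VQ i - VQ i₀)) := by
      rw [Submodule.span_le]
      rintro _ ⟨i, rfl⟩
      have hsplit : VQ i = (VQ i - VQ i₀) + VQ i₀ := by ring
      rw [hsplit]
      exact Submodule.add_mem _
        (Submodule.subset_span (Set.mem_insert_of_mem _ ⟨i, rfl⟩))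
        (Submodule.subset_span (Set.mem_insert _ _))
    obtain ⟨c, z, hz, hwz⟩ := Submodule.mem_span_insert.mp (hins hwmem)
    have hdegw : degQ (fun j => (w j : ℚ)) = 0 := by
      simp only [hdegQ, LinearMap.coe_mk, AddHom.coe_mk]
      push_cast [← Int.cast_sum]
      exact_mod_cast congrArg (Int.cast : ℤ → ℚ) hw
    have hdegz : degQ z = 0 := hdeg_diff hz
    have hdegV : degQ (VQ i₀) = (∑ j, v i₀ j : ℕ) := by
      simp [hdegQ, VQ]
    have hc0 : c = 0 := by
      have h := congrArg degQ hwz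
      rw [hdegw, map_add, map_smul, hdegz, hdegV, smul_eq_mul, add_zero] at h
      have hd0 : ((∑ j, v i₀ j : ℕ) : ℚ) ≠ 0 := Nat.cast_ne_zero.mpr (by omega)
      exact (mul_eq_zero.mp h.symm).resolve_right hd0
    rw [hc0, zero_smul, zero_add] at hwz
    rw [hwz]; exact hz
  -- Step E
  obtain ⟨r, hr, m, hm⟩ : ∃ r : ℕ, 0 < r ∧ ∃ m : Fin s → ℤ,
      ∀ j, (r : ℤ) * w j = ∑ i, m i * ((v i j : ℤ) - (v ⟨0, hs0⟩ j : ℤ)) := by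

    classical
    obtain ⟨c, hc⟩ := (Submodule.mem_span_range_iff_exists_fun ℚ).mp hzmem
    set r : ℕ := ∏ i, (c i).den with hrdef
    have hr : 0 < r := Finset.prod_pos fun i _ => (c i).pos
    refine ⟨r, hr, fun i => (c i).num * ((r / (c i).den : ℕ) : ℤ), fun j => ?_⟩
    have hm : ∀ i : Fin s, (((c i).num * ((r / (c i).den : ℕ) : ℤ) : ℤ) : ℚ) = c i * r := by
      intro i
      obtain ⟨t, ht⟩ := Finset.dvd_prod_of_mem (fun i => (c i).den) (Finset.mem_univ i)
      rw [← hrdef] at ht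
      rw [ht, Nat.mul_div_cancel_left t (c i).pos]
      push_cast
      rw [← mul_assoc, Rat.mul_den_eq_num]
    have hcj := congrFun hc j
    simp only [Finset.sum_apply, Pi.smul_apply, Pi.sub_apply, smul_eq_mul] at hcj
    have : ((r:ℤ) * w j : ℤ) = ((∑ i, ((c i).num * ((r / (c i).den : ℕ) : ℤ)) * ((v i j : ℤ) - (v ⟨0, hs0⟩ j : ℤ)) : ℤ)) := by
      have : ((r:ℚ)) * ((w j : ℚ)) = ∑ i, ((((c i).num * ((r / (c i).den : ℕ) : ℤ) : ℤ) : ℚ)) * ((v i j : ℚ) - (v ⟨0, hs0⟩ j : ℚ)) := by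
        rw [← hcj, Finset.mul_sum]
        apply Finset.sum_congr rfl
        intro i _
        rw [hm i]
        ring
      exact_mod_cast this
    exact this
  -- Step F

  classical
  set i₀ : Fin s := ⟨0, hs0⟩ with hi₀def
  set g : Fin s → ℤ := fun i => m i - (if i = i₀ then (∑ k, m k) else 0) with hgdef
  have hgsum : ∑ i, g i = 0 := by
    simp [hgdef, Finset.sum_sub_distrib]
  have hgV : ∀ j, ∑ i, g i * (v i j : ℤ) = (r:ℤ) * w j := by
    intro j
    rw [hm j]
    simp only [hgdef, sub_mul, mul_sub, Finset.sum_sub_distrib, ite_mul, zero_mul,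
      Finset.sum_ite_eq', Finset.mem_univ, if_true, Finset.sum_mul]
  -- choose M
  obtain ⟨M, hM1, hMw, hMg⟩ : ∃ M : ℕ, 1 ≤ M ∧ (∀ j, (w j).natAbs ≤ M)
      ∧ (∀ i, (g i).natAbs ≤ M) := by
    refine ⟨1 + (Finset.univ.sup fun j => (w j).natAbs)
      + (Finset.univ.sup fun i => (g i).natAbs), by omega, fun j => ?_, fun i => ?_⟩
    · exact Nat.le_trans (Finset.le_sup (f := fun j => (w j).natAbs) (Finset.mem_univ j))
        (by omega)
    · exact Nat.le_trans (Finset.le_sup (f := fun i => (g i).natAbs) (Finset.mem_univ i))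
        (by omega)
  set u : Fin n → ℕ := fun j => ∑ i, v i j with hudef
  have hu1 : ∀ j, 1 ≤ u j := by
    intro j
    obtain ⟨i, hi⟩ := hu j
    calc 1 ≤ v i j := Nat.one_le_iff_ne_zero.mpr hi
      _ ≤ u j := Finset.single_le_sum (f := fun i => v i j) (fun _ _ => Nat.zero_le _)
          (Finset.mem_univ i)
  have hann : ∀ j, 0 ≤ w j + (M:ℤ) * u j := by
    intro j
    have h2 : ((w j).natAbs : ℤ) ≤ (M:ℤ) := by exact_mod_cast hMw j
    have h3 : (M:ℤ) ≤ (M:ℤ) * u j := le_mul_of_one_le_right (by positivity)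
      (by exact_mod_cast hu1 j)
    omega
  set a : Fin n → ℕ := fun j => (w j + (M:ℤ) * u j).toNat with hadef
  have haz : ∀ j, (a j : ℤ) = w j + (M:ℤ) * u j := fun j => Int.toNat_of_nonneg (hann j)
  set N : Fin s → ℕ := fun i => (g i + (r:ℤ) * M).toNat with hNdef
  have hNnn : ∀ i, 0 ≤ g i + (r:ℤ) * M := by
    intro i
    have h2 : ((g i).natAbs : ℤ) ≤ (M:ℤ) := by exact_mod_cast hMg i
    have h3 : (M:ℤ) ≤ (r:ℤ) * M := le_mul_of_one_le_left (by positivity)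
      (by exact_mod_cast hr)
    omega
  have hNz : ∀ i, (N i : ℤ) = g i + (r:ℤ) * M := fun i => Int.toNat_of_nonneg (hNnn i)
  have hNsum : ∑ i, N i = r * (M * s) := by
    have : ((∑ i, N i : ℕ) : ℤ) = ((r * (M * s) : ℕ) : ℤ) := by
      push_cast
      simp only [hNz]
      rw [Finset.sum_add_distrib, hgsum, zero_add, Finset.sum_const, Finset.card_univ,
        Fintype.card_fin]
      push_cast
      ring
    exact_mod_cast this
  -- (y^a)^r ∈ I^(r*(M*s))
  have hra : ∀ j, r * a j = ∑ i, N i * v i j := by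
    intro j
    have : ((r * a j : ℕ) : ℤ) = ((∑ i, N i * v i j : ℕ) : ℤ) := by
      push_cast
      rw [haz j]
      simp only [hNz]
      rw [show (∑ i, (g i + (r:ℤ)*M) * (v i j : ℤ))
          = ∑ i, g i * (v i j:ℤ) + (r:ℤ)*M * ∑ i, (v i j:ℤ) by
        rw [Finset.mul_sum, ← Finset.sum_add_distrib]
        exact Finset.sum_congr rfl fun i _ => by ring]
      rw [hgV j]
      have huz : ((u j : ℕ):ℤ) = ∑ i, (v i j:ℤ) := by
        rw [hudef]; push_cast; ring
      rw [← huz]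
      ring
    exact_mod_cast this
  have hmem1 : (∏ j, MvPolynomial.X j ^ a j : MvPolynomial (Fin n) K) ^ r
      ∈ (edgeIdeal K v) ^ (r * (M * s)) := by
    have hprod : (∏ j, MvPolynomial.X j ^ a j : MvPolynomial (Fin n) K) ^ r
        = ∏ j, MvPolynomial.X j ^ (r * a j) := by
      rw [← Finset.prod_pow]
      exact Finset.prod_congr rfl fun j _ => by rw [← pow_mul, mul_comm]
    rw [hprod, ← hNsum]
    exact mem_pow_of v N _ hra
  have hmem2 := hnormal (M * s) (Nat.mul_pos hM1 hs0) a r hr hmem1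
  obtain ⟨β, hβ⟩ := extract v (M * s) a hmem2
  -- degree count forces equality
  set d : ℕ := ∑ j, v i₀ j with hddef
  have hdeg_edge : ∀ i, ∑ j, v i j = d := fun i => hunif i i₀
  have hdeg_a : ∑ j, a j = M * s * d := by
    have : ((∑ j, a j : ℕ):ℤ) = ((M * s * d : ℕ):ℤ) := by
      push_cast
      simp only [haz]
      rw [Finset.sum_add_distrib, hw, zero_add, ← Finset.mul_sum]
      have : (∑ j, (u j:ℤ)) = (s:ℤ) * d := by
        rw [hudef]
        push_cast
        rw [Finset.sum_comm]
        rw [show (∑ i, ∑ j, ((v i j : ℕ):ℤ)) = ∑ i : Fin s, (d:ℤ) from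
          Finset.sum_congr rfl fun i _ => by exact_mod_cast hdeg_edge i]
        rw [Finset.sum_const, Finset.card_univ, Fintype.card_fin]
        push_cast; ring
      rw [this]
      ring
    exact_mod_cast this
  have hdeg_b : ∑ j, (∑ t : Fin (M*s), v (β t) j) = M * s * d := by
    rw [Finset.sum_comm]
    rw [show (∑ t : Fin (M*s), ∑ j, v (β t) j) = ∑ t : Fin (M*s), d from
      Finset.sum_congr rfl fun t _ => hdeg_edge (β t)]
    rw [Finset.sum_const, Finset.card_univ, Fintype.card_fin, smul_eq_mul]
  have heq : ∀ j, (∑ t : Fin (M*s), v (β t) j) = a j := by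
    have hsum_eq : ∑ j, (∑ t : Fin (M*s), v (β t) j) = ∑ j, a j := by rw [hdeg_a, hdeg_b]
    intro j
    by_contra hne
    have hlt : (∑ t : Fin (M*s), v (β t) j) < a j := lt_of_le_of_ne (hβ j) hne
    have : ∑ j, (∑ t : Fin (M*s), v (β t) j) < ∑ j, a j :=
      Finset.sum_lt_sum (fun j _ => hβ j) ⟨j, Finset.mem_univ j, hlt⟩
    omega
  -- conclude
  have hwid : w = (∑ t : Fin (M*s), ((fun j => (v (β t) j : ℤ)) - fun j => (v i₀ j : ℤ)))
      - (M:ℤ) • (∑ i, ((fun j => (v i j : ℤ)) - fun j => (v i₀ j : ℤ))) := by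
    funext j
    have h1 : (a j : ℤ) = ∑ t : Fin (M*s), (v (β t) j : ℤ) := by
      rw [← heq j]; push_cast; ring
    have h2 : w j = (a j:ℤ) - (M:ℤ) * (u j:ℤ) := by rw [haz j]; ring
    have huz : ((u j : ℕ):ℤ) = ∑ i, (v i j:ℤ) := by rw [hudef]; push_cast; ring
    have expand : ((∑ t : Fin (M*s), ((fun j' => (v (β t) j' : ℤ)) - fun j' => (v i₀ j' : ℤ)))
          - (M:ℤ) • (∑ i, ((fun j' => (v i j' : ℤ)) - fun j' => (v i₀ j' : ℤ)))) j
        = (∑ t : Fin (M*s), ((v (β t) j:ℤ) - (v i₀ j:ℤ)))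
          - (M:ℤ) * (∑ i, ((v i j:ℤ) - (v i₀ j:ℤ))) := by
      simp only [Pi.sub_apply, Pi.smul_apply, Finset.sum_apply, smul_eq_mul]
    rw [expand, Finset.sum_sub_distrib, Finset.sum_sub_distrib, Finset.sum_const,
      Finset.sum_const, Finset.card_univ, Finset.card_univ, Fintype.card_fin, Fintype.card_fin,
      nsmul_eq_mul, nsmul_eq_mul, h2, h1, huz]
    push_cast
    ring
  rw [hwid]
  refine Submodule.sub_mem _ ?_ (Submodule.smul_mem _ _ ?_)
  · exact Submodule.sum_mem _ fun t _ => Submodule.subset_span ⟨(β t, i₀), rfl⟩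
  · exact Submodule.sum_mem _ fun i _ => Submodule.subset_span ⟨(i, i₀), rfl⟩

theorem units_const {K : Type*} [Field K] {n s : ℕ} (v : Fin s → Fin n → ℕ)
    (hkey : ∀ w : Fin n → ℤ, (∑ j, w j) = 0 → w ∈ Submodule.span ℤ
      (Set.range fun p : Fin s × Fin s => ((fun j => (v p.1 j : ℤ)) - fun j => (v p.2 j : ℤ))))
    (x : Fin n → Kˣ) (hx : ∀ i k : Fin s, (∏ j, x j ^ v i j) = ∏ j, x j ^ v k j) :
    ∀ j j', x j = x j' := by
  classical
  have hP : ∀ w ∈ Submodule.span ℤ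
      (Set.range fun p : Fin s × Fin s => ((fun j => (v p.1 j : ℤ)) - fun j => (v p.2 j : ℤ))),
      (∏ j, x j ^ (w j)) = 1 := by
    intro w hw
    induction hw using Submodule.span_induction with
    | mem w hwmem =>
      obtain ⟨p, rfl⟩ := hwmem
      have : ∀ j, x j ^ (((fun j => (v p.1 j : ℤ)) - fun j => (v p.2 j : ℤ)) j)
          = x j ^ (v p.1 j) * (x j ^ (v p.2 j))⁻¹ := by
        intro j
        rw [Pi.sub_apply, zpow_sub, zpow_natCast, zpow_natCast]
      rw [Finset.prod_congr rfl fun j _ => this j, Finset.prod_mul_distrib,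
        Finset.prod_inv_distrib, hx p.1 p.2, mul_inv_cancel]
    | zero => simp
    | add y z _ _ hy hz =>
      rw [show (∏ j, x j ^ ((y + z) j)) = (∏ j, x j ^ y j) * ∏ j, x j ^ z j by
        rw [← Finset.prod_mul_distrib]
        exact Finset.prod_congr rfl fun j _ => by rw [Pi.add_apply, zpow_add], hy, hz, mul_one]
    | smul c y _ hy =>
      rw [show (∏ j, x j ^ ((c • y) j)) = (∏ j, x j ^ y j) ^ c by
        rw [← Finset.prod_zpow]
        exact Finset.prod_congr rfl fun j _ => by rw [Pi.smul_apply, smul_eq_mul, zpow_mul'], hy,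
        one_zpow]
  intro j j'
  by_cases hjj : j = j'
  · rw [hjj]
  have hsum : (∑ k, ((Pi.single j 1 - Pi.single j' 1 : Fin n → ℤ)) k) = 0 := by
    simp [Finset.sum_sub_distrib]
  have h1 := hP _ (hkey _ hsum)
  have hsingle : ∀ jj : Fin n, (∏ k, x k ^ (((Pi.single jj 1 : Fin n → ℤ)) k)) = x jj := by
    intro jj
    rw [Finset.prod_eq_single jj]
    · simp
    · intro k _ hk
      rw [Pi.single_eq_of_ne hk, zpow_zero]
    · intro h; exact absurd (Finset.mem_univ jj) h
  have h2 : (∏ k, x k ^ (((Pi.single j 1 - Pi.single j' 1 : Fin n → ℤ)) k))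
      = x j * (x j')⁻¹ := by
    rw [show (∏ k, x k ^ (((Pi.single j 1 - Pi.single j' 1 : Fin n → ℤ)) k))
        = (∏ k, x k ^ (((Pi.single j 1 : Fin n → ℤ)) k)) * (∏ k, x k ^ (((Pi.single j' 1 : Fin n → ℤ)) k))⁻¹ by
      rw [← Finset.prod_inv_distrib, ← Finset.prod_mul_distrib]
      exact Finset.prod_congr rfl fun k _ => by rw [Pi.sub_apply, zpow_sub], hsingle, hsingle]
  rw [h2] at h1
  exact (mul_inv_eq_one.mp h1)

set_option maxHeartbeats 1000000 in
theorem counting {K : Type*} [Field K] [Fintype K] {q n s : ℕ}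
    (hq : Fintype.card K = q) (hq3 : 3 ≤ q) (hs : 2 ≤ s) (hn : 0 < n)
    (v : Fin s → Fin n → ℕ)
    (hunif : ∀ i k : Fin s, ∑ j, v i j = ∑ j, v k j)
    (hkey : ∀ w : Fin n → ℤ, (∑ j, w j) = 0 → w ∈ Submodule.span ℤ
      (Set.range fun p : Fin s × Fin s => ((fun j => (v p.1 j : ℤ)) - fun j => (v p.2 j : ℤ)))) :
    (toricSet K v).ncard = (q - 1) ^ (n - 1) := by
  classical
  have hs0 : 0 < s := by omega
  set i₀ : Fin s := ⟨0, hs0⟩ with hi₀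
  set j₀ : Fin n := ⟨0, hn⟩ with hj₀
  set δ : Kˣ →* (Fin n → Kˣ) :=
    { toFun := fun c _ => c, map_one' := rfl, map_mul' := fun _ _ => rfl } with hδ
  set D : Subgroup (Fin n → Kˣ) := δ.range with hD
  set φ : (Fin n → Kˣ) → (Fin s → K) := fun x i => ∏ j, (x j : K) ^ v i j with hφ
  have hcoe : ∀ (x : Fin n → Kˣ) i, ((∏ j, x j ^ v i j : Kˣ) : K) = φ x i := by
    intro x i
    rw [show ((∏ j, x j ^ v i j : Kˣ) : K) = (Units.coeHom K) (∏ j, x j ^ v i j) from rfl,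
      map_prod]
    exact Finset.prod_congr rfl fun j _ => by rw [map_pow]; rfl
  have hφne : ∀ x, φ x ≠ 0 := by
    intro x h0
    have h1 := congrFun h0 i₀
    have h2 := hcoe x i₀
    rw [h1] at h2
    exact Units.ne_zero _ h2
  set F : (Fin n → Kˣ) → Projectivization K (Fin s → K) :=
    fun x => Projectivization.mk K (φ x) (hφne x) with hF
  have hiff : ∀ x y : Fin n → Kˣ, F x = F y ↔ x⁻¹ * y ∈ D := by
    intro x y
    constructor
    · intro hxy
      rw [hF] at hxy
      obtain ⟨a, ha⟩ := (Projectivization.mk_eq_mk_iff K _ _ _ _).mp hxy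
      set z : Fin n → Kˣ := x⁻¹ * y with hz
      have hΦz : ∀ i : Fin s, (∏ j, z j ^ v i j)
          = (∏ j, x j ^ v i j)⁻¹ * ∏ j, y j ^ v i j := by
        intro i
        rw [← Finset.prod_inv_distrib, ← Finset.prod_mul_distrib]
        refine Finset.prod_congr rfl fun j _ => ?_
        rw [hz, Pi.mul_apply, Pi.inv_apply, mul_pow, inv_pow]
      have hax : ∀ i : Fin s, (∏ j, y j ^ v i j) = a⁻¹ * ∏ j, x j ^ v i j := by
        intro i
        have h1 := congrFun ha i
        have h2 : (a : K) * φ y i = φ x i := h1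
        rw [← hcoe, ← hcoe] at h2
        have h4 : (a : K) * ((∏ j, y j ^ v i j : Kˣ) : K)
            = ((a * ∏ j, y j ^ v i j : Kˣ) : K) := by push_cast; rfl
        rw [h4] at h2
        have h3 : a * (∏ j, y j ^ v i j) = ∏ j, x j ^ v i j := Units.ext h2
        rw [← h3]; group
      have hcomm : ∀ A : Kˣ, A⁻¹ * (a⁻¹ * A) = a⁻¹ := fun A => by
        rw [mul_comm a⁻¹ A, ← mul_assoc, inv_mul_cancel, one_mul]
      have hall : ∀ i k : Fin s, (∏ j, z j ^ v i j) = ∏ j, z j ^ v k j := by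
        intro i k
        rw [hΦz i, hax i, hΦz k, hax k, hcomm, hcomm]
      have hconst := units_const v hkey z hall
      refine ⟨z j₀, ?_⟩
      funext j
      exact hconst j₀ j
    · rintro ⟨c, hc⟩
      have hy : y = x * δ c := by
        rw [hc]; group
      rw [hF]
      simp only
      rw [Projectivization.mk_eq_mk_iff]
      set d : ℕ := ∑ j, v i₀ j with hd
      refine ⟨(c ^ d)⁻¹, ?_⟩
      funext i
      have h1 : φ y i = φ x i * ((c ^ d : Kˣ) : K) := by
        rw [hy, hφ]
        simp only
        rw [show (∏ j, (((x * δ c) j : Kˣ) : K) ^ v i j)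
            = (∏ j, ((x j : Kˣ):K) ^ v i j) * ∏ j, (c:K) ^ v i j by
          rw [← Finset.prod_mul_distrib]
          refine Finset.prod_congr rfl fun j _ => ?_
          rw [Pi.mul_apply]
          push_cast
          rw [mul_pow]
          rfl]
        rw [Finset.prod_pow_eq_pow_sum]
        congr 1
        rw [hunif i i₀, ← hd]
        push_cast
        rfl
      show (((c ^ d)⁻¹ : Kˣ) : K) * φ y i = φ x i
      rw [h1, mul_comm (φ x i), ← mul_assoc]
      norm_cast
      simp
  set Fbar : ((Fin n → Kˣ) ⧸ D) → Projectivization K (Fin s → K) :=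
    fun t => Quotient.liftOn' t F
      (fun x y h => (hiff x y).mpr (QuotientGroup.leftRel_apply.mp h)) with hFbar
  have hinj : Function.Injective Fbar := by
    intro t₁ t₂
    refine Quotient.inductionOn₂' t₁ t₂ fun x y h => ?_
    have h2 : x⁻¹ * y ∈ D := (hiff x y).mp h
    exact Quotient.sound' (QuotientGroup.leftRel_apply.mpr h2)
  have hrange : Set.range Fbar = toricSet K v := by
    ext P
    constructor
    · rintro ⟨t, rfl⟩
      refine Quotient.inductionOn' t fun x => ?_
      exact ⟨fun j => (x j : K), fun j => (x j).ne_zero, hφne x, rfl⟩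
    · rintro ⟨x0, hx0, hne, rfl⟩
      refine ⟨QuotientGroup.mk (fun j => Units.mk0 (x0 j) (hx0 j)), ?_⟩
      show F _ = _
      rw [hF]
      simp only
      rw [Projectivization.mk_eq_mk_iff]
      refine ⟨1, ?_⟩
      rw [one_smul]
      funext i
      exact Finset.prod_congr rfl fun j _ => by rw [Units.val_mk0]
  have hcard1 : Nat.card (Fin n → Kˣ) = (q-1)^n := by
    rw [Nat.card_eq_fintype_card, Fintype.card_pi]
    simp [Fintype.card_units, hq]
  have hinjδ : Function.Injective δ := fun c c' h => congrFun h j₀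
  have hDcard : Nat.card D = q - 1 := by
    have hset : ((D : Set (Fin n → Kˣ))) = Set.range δ := by
      ext g; simp [hD, MonoidHom.mem_range]
    calc Nat.card D = Nat.card (Set.range δ) := Nat.card_congr (Equiv.setCongr hset)
      _ = Nat.card Kˣ := Nat.card_range_of_injective hinjδ
      _ = q - 1 := by rw [Nat.card_eq_fintype_card, Fintype.card_units, hq]
  have hquot := Subgroup.card_eq_card_quotient_mul_card_subgroup D
  have hmul : (q-1)^n = Nat.card ((Fin n → Kˣ) ⧸ D) * (q-1) := by
    rw [← hcard1, hquot, hDcard]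
  have hpow : (q-1)^n = (q-1)^(n-1) * (q-1) := by
    conv_lhs => rw [show n = (n-1)+1 by omega]
    rw [pow_succ]
  have hcard2 : (toricSet K v).ncard = Nat.card ((Fin n → Kˣ) ⧸ D) := by
    rw [← hrange, ← Nat.card_coe_set_eq]
    exact (Nat.card_congr (Equiv.ofInjective Fbar hinj)).symm
  rw [hcard2]
  exact Nat.eq_of_mul_eq_mul_right (show 0 < q-1 by omega) (hmul.symm.trans hpow)

end Aux

/-- For a uniform clutter whose incidence matrix has rank `n` and whose
edge ideal is normal, the toric set `X ⊆ P^{s-1}` satisfies `|X| = (q-1)^{n-1}`. -/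
theorem stmt16 {K : Type*} [Field K] [Fintype K] {q n s : ℕ}
    (hq : Fintype.card K = q) (hq3 : 3 ≤ q) (hs : 2 ≤ s)
    (v : Fin s → Fin n → ℕ) (hv : IsClutter v)
    (hunif : ∀ i k : Fin s, ∑ j, v i j = ∑ j, v k j)
    (hrank : (Matrix.of fun (j : Fin n) (i : Fin s) => ((v i j : ℚ))).rank = n)
    (hnormal : ∀ i : ℕ, 1 ≤ i → ∀ a : Fin n → ℕ, ∀ p : ℕ, 1 ≤ p →
      (∏ j, MvPolynomial.X j ^ a j : MvPolynomial (Fin n) K) ^ p ∈ (edgeIdeal K v) ^ (p * i) →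
      (∏ j, MvPolynomial.X j ^ a j : MvPolynomial (Fin n) K) ∈ (edgeIdeal K v) ^ i) :
    (toricSet K v).ncard = (q - 1) ^ (n - 1) := by
  obtain ⟨hv1, hv2⟩ := hv
  have hn : 0 < n := by
    obtain ⟨j, -, -⟩ := hv2 ⟨0, by omega⟩ ⟨1, by omega⟩ (by simp [Fin.ext_iff])
    exact j.pos
  exact Aux.counting hq hq3 hs hn v hunif
    (fun w hw => Aux.key_lattice hs v hunif hv2 hrank hnormal w hw)
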